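/- Let x_1 ∈ (0,1) be a non-dyadic real number and let x_n = 1/2^{n-1} for n ≥ 2. Then the range of the cardinal function of (x_n)_{n≥1} is exactly {1,2,3}. -/

import Mathlib

open Set

/-- The achievement set of a sequence: all subsums. -/
noncomputable def achSet (x : ℕ → ℝ) : Set ℝ :=
  {t | ∃ S : Set ℕ, ∑' n : S, x n = t}

/-- The cardinal function: the number of representations of `t` as a subsum. -/
noncomputable def cardFun (x : ℕ → ℝ) (t : ℝ) : Cardinal :=
  Cardinal.mk {S : Set ℕ // ∑' n : S, x n = t}

/-- The tail sum `r_k = ∑_{n > k} x n`. -/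
noncomputable def tailSum (x : ℕ → ℝ) (k : ℕ) : ℝ := ∑' n, x (k + 1 + n)

/-- Prepending a term to a sequence. -/
def prepend (y : ℝ) (x : ℕ → ℝ) : ℕ → ℝ := fun n =>
  match n with
  | 0 => y
  | Nat.succ m => x m

/-- A dyadic rational in `[0,∞)`: a number of the form `k / 2^m`. -/
def IsDyadic (t : ℝ) : Prop := ∃ k m : ℕ, t = (k : ℝ) / 2 ^ m

namespace S9

noncomputable def g : ℕ → ℝ := fun n => (2:ℝ)⁻¹ ^ (n+1)

lemma g_pos (n : ℕ) : 0 < g n := by simp only [g]; positivity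

lemma g_summable : Summable g := by
  have : Summable (fun n : ℕ => (2:ℝ)⁻¹ ^ n) := summable_geometric_of_lt_one (by norm_num) (by norm_num)
  have h := this.mul_right (2:ℝ)⁻¹
  apply h.congr
  intro n
  simp [g, pow_succ]

lemma sumInd (T : Set ℕ) : Summable (T.indicator g) := g_summable.indicator T

noncomputable def b (T : Set ℕ) : ℝ := ∑' n, T.indicator g n

lemma b_eq (T : Set ℕ) : b T = ∑' n : T, g n := (tsum_subtype T g).symm

lemma ind_nonneg (T : Set ℕ) (n : ℕ) : 0 ≤ T.indicator g n :=
  Set.indicator_nonneg (fun i _ => (g_pos i).le) n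

lemma ind_le (T : Set ℕ) (n : ℕ) : T.indicator g n ≤ g n :=
  Set.indicator_le_self' (fun i _ => (g_pos i).le) n

lemma b_nonneg (T : Set ℕ) : 0 ≤ b T := tsum_nonneg (ind_nonneg T)

lemma le_b {T : Set ℕ} {n : ℕ} (h : n ∈ T) : g n ≤ b T := by
  have := Summable.le_tsum (sumInd T) n (fun j _ => ind_nonneg T j)
  rwa [Set.indicator_of_mem h] at this

lemma b_empty : b (∅ : Set ℕ) = 0 := by simp [b]

lemma b_pos {T : Set ℕ} (h : T.Nonempty) : 0 < b T := by
  obtain ⟨n, hn⟩ := h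
  exact lt_of_lt_of_le (g_pos n) (le_b hn)

lemma tail_g (m : ℕ) : ∑' n, g (n + (m + 1)) = g m := by
  have h2 : ∀ n : ℕ, g (n + (m+1)) = (2:ℝ)⁻¹^(m+2) * (2:ℝ)⁻¹ ^ n := by
    intro n; simp only [g]; rw [← pow_add]; ring_nf
  rw [tsum_congr h2, tsum_mul_left, tsum_geometric_of_lt_one (by norm_num) (by norm_num)]
  simp only [g]
  norm_num
  ring

lemma b_singleton (m : ℕ) : b {m} = g m := by rw [b_eq, tsum_singleton]

lemma b_Ioi (m : ℕ) : b (Set.Ioi m) = g m := by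
  rw [b_eq]
  let e : ℕ ≃ (Set.Ioi m : Set ℕ) :=
    { toFun := fun n => ⟨n + (m+1), by simp [Set.mem_Ioi]; omega⟩
      invFun := fun k => (k : ℕ) - (m+1)
      left_inv := fun n => by simp
      right_inv := fun k => by
        apply Subtype.ext
        have := k.2
        simp only [Set.mem_Ioi] at this
        simp; omega }
  rw [← e.tsum_eq (fun k : (Set.Ioi m : Set ℕ) => g (k : ℕ))]
  have : ∀ n : ℕ, g ((e n : ℕ)) = g (n + (m+1)) := fun n => rfl
  rw [tsum_congr this, tail_g]


lemma structure_lemma {T T' : Set ℕ} (h : b T = b T') {m : ℕ}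
    (hm : m ∈ T) (hm' : m ∉ T') (hlt : ∀ n, n < m → (n ∈ T ↔ n ∈ T')) :
    (∀ n, m < n → n ∉ T) ∧ (∀ n, m < n → n ∈ T') := by
  set f := T.indicator g with hf
  set f' := T'.indicator g with hf'
  have hsf : Summable f := sumInd T
  have hsf' : Summable f' := sumInd T'
  have e1 := Summable.sum_add_tsum_nat_add (f := f) (m+1) hsf
  have e2 := Summable.sum_add_tsum_nat_add (f := f') (m+1) hsf'
  have hsum : ∑ i ∈ Finset.range m, f i = ∑ i ∈ Finset.range m, f' i := by
    apply Finset.sum_congr rfl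
    intro i hi
    have hi' : i < m := Finset.mem_range.mp hi
    show T.indicator g i = T'.indicator g i
    by_cases hiT : i ∈ T
    · rw [Set.indicator_of_mem hiT, Set.indicator_of_mem ((hlt i hi').mp hiT)]
    · rw [Set.indicator_of_notMem hiT,
        Set.indicator_of_notMem (fun hc => hiT ((hlt i hi').mpr hc))]
  have hfm : f m = g m := Set.indicator_of_mem hm g
  have hfm' : f' m = 0 := Set.indicator_of_notMem hm' g
  -- key equation
  have hstail : Summable (fun i => f (i + (m+1))) := (summable_nat_add_iff (m+1)).2 hsf
  have hstail' : Summable (fun i => f' (i + (m+1))) := (summable_nat_add_iff (m+1)).2 hsf'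
  have hgtail : Summable (fun i => g (i + (m+1))) := (summable_nat_add_iff (m+1)).2 g_summable
  have keyE : g m + ∑' i, f (i + (m+1)) = ∑' i, f' (i + (m+1)) := by
    have hb : b T = ∑' n, f n := rfl
    have hb' : b T' = ∑' n, f' n := rfl
    rw [Finset.sum_range_succ, hsum, hfm] at e1
    rw [Finset.sum_range_succ, hfm', add_zero] at e2
    have : ∑ i ∈ Finset.range m, f' i + g m + ∑' i, f (i + (m+1))
        = ∑ i ∈ Finset.range m, f' i + ∑' i, f' (i + (m+1)) := by
      rw [e1, e2, ← hb, ← hb', h]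
    linarith
  have htail_le : ∑' i, f' (i + (m+1)) ≤ g m := by
    calc ∑' i, f' (i + (m+1)) ≤ ∑' i, g (i + (m+1)) :=
          Summable.tsum_le_tsum (fun i => ind_le T' _) hstail' hgtail
      _ = g m := tail_g m
  have htail_nonneg : 0 ≤ ∑' i, f (i + (m+1)) := tsum_nonneg (fun i => ind_nonneg T _)
  have hzero : ∑' i, f (i + (m+1)) = 0 := by linarith
  have hfull : ∑' i, f' (i + (m+1)) = g m := by linarith
  constructor
  · intro n hn
    obtain ⟨k, rfl⟩ := Nat.exists_eq_add_of_lt hn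
    intro hnT
    have h1 : f (m + k + 1) ≤ 0 := by
      have := Summable.le_tsum hstail k (fun j _ => ind_nonneg T _)
      rw [hzero] at this
      have hidx : k + (m+1) = m + k + 1 := by omega
      rwa [hidx] at this
    have h2 : f (m + k + 1) = g (m + k + 1) := Set.indicator_of_mem hnT g
    have := g_pos (m + k + 1)
    linarith
  · intro n hn
    obtain ⟨k, rfl⟩ := Nat.exists_eq_add_of_lt hn
    by_contra hnT
    have hdiff : ∑' i, (g (i + (m+1)) - f' (i + (m+1))) = 0 := by
      rw [Summable.tsum_sub hgtail hstail', tail_g, hfull, sub_self]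
    have h1 : g (k + (m+1)) - f' (k + (m+1)) ≤ 0 := by
      have := Summable.le_tsum (hgtail.sub hstail') k
        (fun j _ => by have := ind_le T' (j + (m+1)); simp only [sub_nonneg]; linarith)
      rw [hdiff] at this
      exact this
    have hidx : k + (m+1) = m + k + 1 := by omega
    rw [hidx] at h1
    have h2 : f' (m + k + 1) = 0 := Set.indicator_of_notMem hnT g
    have := g_pos (m + k + 1)
    linarith

/-- bounded above / cofinal-full predicates -/
def Bdd (T : Set ℕ) : Prop := ∃ m, ∀ n, m < n → n ∉ T
def Cof (T : Set ℕ) : Prop := ∃ m, ∀ n, m < n → n ∈ T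

lemma not_bdd_and_cof {T : Set ℕ} : ¬ (Bdd T ∧ Cof T) := by
  rintro ⟨⟨m1, h1⟩, ⟨m2, h2⟩⟩
  exact h1 (m1 + m2 + 1) (by omega) (h2 (m1 + m2 + 1) (by omega))

lemma rep_dichotomy {T T' : Set ℕ} (h : b T = b T') (hne : T ≠ T') :
    (Bdd T ∧ Cof T') ∨ (Bdd T' ∧ Cof T) := by
  classical
  have hex : ∃ n, ¬ ((n ∈ T) ↔ (n ∈ T')) := by
    by_contra hc
    push_neg at hc
    exact hne (Set.ext fun n => hc n)
  set m := Nat.find hex with hmdef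
  have hmspec : ¬ ((m ∈ T) ↔ (m ∈ T')) := Nat.find_spec hex
  have hlt : ∀ n, n < m → (n ∈ T ↔ n ∈ T') := by
    intro n hn
    have := Nat.find_min hex hn
    tauto
  by_cases hmT : m ∈ T
  · have hmT' : m ∉ T' := by tauto
    obtain ⟨hb1, hb2⟩ := structure_lemma h hmT hmT' hlt
    exact Or.inl ⟨⟨m, hb1⟩, ⟨m, hb2⟩⟩
  · have hmT' : m ∈ T' := by tauto
    obtain ⟨hb1, hb2⟩ := structure_lemma h.symm hmT' hmT (fun n hn => (hlt n hn).symm)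
    exact Or.inr ⟨⟨m, hb1⟩, ⟨m, hb2⟩⟩

lemma at_most_two {T1 T2 T3 : Set ℕ} (h12 : b T1 = b T2) (h13 : b T1 = b T3)
    (hne : T1 ≠ T2) : T3 = T1 ∨ T3 = T2 := by
  by_contra hc
  push_neg at hc
  obtain ⟨h31, h32⟩ := hc
  have d12 := rep_dichotomy h12 hne
  have d13 := rep_dichotomy h13 (fun he => h31 he.symm)
  have d23 := rep_dichotomy (h12.symm.trans h13) (fun he => h32 he.symm)
  rcases d12 with ⟨b1, c2⟩ | ⟨b2, c1⟩ <;> rcases d13 with ⟨b1', c3⟩ | ⟨b3, c1'⟩ <;>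
    rcases d23 with ⟨b2', c3'⟩ | ⟨b3', c2'⟩
  all_goals first
    | exact not_bdd_and_cof ⟨‹Bdd T1›, ‹Cof T1›⟩
    | exact not_bdd_and_cof ⟨‹Bdd T2›, ‹Cof T2›⟩
    | exact not_bdd_and_cof ⟨‹Bdd T3›, ‹Cof T3›⟩


lemma isDyadic_zero : IsDyadic 0 := ⟨0, 0, by norm_num⟩

lemma isDyadic_g (n : ℕ) : IsDyadic (g n) := ⟨1, n+1, by simp [g, div_pow, inv_pow, one_div]⟩

lemma isDyadic_add {u v : ℝ} (hu : IsDyadic u) (hv : IsDyadic v) : IsDyadic (u + v) := by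
  obtain ⟨k, m, rfl⟩ := hu
  obtain ⟨k', m', rfl⟩ := hv
  refine ⟨k * 2 ^ m' + k' * 2 ^ m, m + m', ?_⟩
  push_cast
  rw [pow_add]
  field_simp
  try ring

lemma isDyadic_sub {u v : ℝ} (hu : IsDyadic u) (hv : IsDyadic v) (h : 0 ≤ u - v) :
    IsDyadic (u - v) := by
  obtain ⟨k, m, rfl⟩ := hu
  obtain ⟨k', m', rfl⟩ := hv
  have h2 : ((k : ℝ) * 2 ^ m' - k' * 2 ^ m) / 2 ^ (m + m') = (k:ℝ)/2^m - (k':ℝ)/2^m' := by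
    rw [pow_add]; field_simp
  have hnum : (0:ℝ) ≤ (k : ℝ) * 2 ^ m' - k' * 2 ^ m := by
    have hdd : (0:ℝ) ≤ ((k : ℝ) * 2 ^ m' - k' * 2 ^ m) / 2 ^ (m + m') := h2 ▸ h
    have hpos : (0:ℝ) < 2 ^ (m + m') := by positivity
    rcases div_nonneg_iff.mp hdd with ⟨h', _⟩ | ⟨_, hb⟩
    · exact h'
    · linarith
  have : (k' : ℕ) * 2 ^ m ≤ k * 2 ^ m' := by
    have h3 : (k':ℝ) * 2 ^ m ≤ (k:ℝ) * 2 ^ m' := by linarith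
    exact_mod_cast h3
  refine ⟨k * 2 ^ m' - k' * 2 ^ m, m + m', ?_⟩
  rw [← h2]
  congr 1
  push_cast [Nat.cast_sub this]
  ring

lemma bdd_finite {T : Set ℕ} (h : Bdd T) : T.Finite := by
  obtain ⟨m, hm⟩ := h
  apply (Set.finite_Iic m).subset
  intro n hn
  simp only [Set.mem_Iic]
  by_contra hc
  exact hm n (by omega) hn

lemma isDyadic_finsum (s : Finset ℕ) : IsDyadic (∑ n ∈ s, g n) := by
  classical
  induction s using Finset.induction with
  | empty => simpa using isDyadic_zero
  | insert _ _ hx ih =>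
    rw [Finset.sum_insert hx]
    exact isDyadic_add (isDyadic_g _) ih

lemma isDyadic_b_of_bdd {T : Set ℕ} (h : Bdd T) : IsDyadic (b T) := by
  have hfin := bdd_finite h
  have h1 : b T = ∑ n ∈ hfin.toFinset, T.indicator g n := by
    apply tsum_eq_sum
    intro n hn
    exact Set.indicator_of_notMem (fun hc => hn (hfin.mem_toFinset.mpr hc)) g
  have h2 : ∑ n ∈ hfin.toFinset, T.indicator g n = ∑ n ∈ hfin.toFinset, g n :=
    Finset.sum_congr rfl fun n hn => Set.indicator_of_mem (hfin.mem_toFinset.mp hn) g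
  rw [h1, h2]
  exact isDyadic_finsum _

lemma two_reps_dyadic {T T' : Set ℕ} (h : b T = b T') (hne : T ≠ T') : IsDyadic (b T) := by
  rcases rep_dichotomy h hne with ⟨hb, _⟩ | ⟨hb, _⟩
  · exact isDyadic_b_of_bdd hb
  · rw [h]; exact isDyadic_b_of_bdd hb

lemma second_rep {T : Set ℕ} (hb : Bdd T) (hne : T.Nonempty) :
    ∃ T', T' ≠ T ∧ b T' = b T := by
  have hfin := bdd_finite hb
  have hne' : hfin.toFinset.Nonempty := by
    simpa [Set.Finite.toFinset] using hne
  set m0 := hfin.toFinset.max' hne' with hm0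
  have hm0T : m0 ∈ T := hfin.mem_toFinset.mp (hfin.toFinset.max'_mem hne')
  have hle : ∀ n ∈ T, n ≤ m0 := fun n hn => hfin.toFinset.le_max' n (hfin.mem_toFinset.mpr hn)
  refine ⟨(T \ {m0}) ∪ Set.Ioi m0, ?_, ?_⟩
  · intro he
    have : m0 + 1 ∈ T := by
      have : (m0 + 1 : ℕ) ∈ (T \ {m0}) ∪ Set.Ioi m0 := Or.inr (by simp)
      rwa [he] at this
    have := hle _ this
    omega
  · have hdisj1 : Disjoint (T \ {m0}) (Set.Ioi m0) := by
      rw [Set.disjoint_left]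
      rintro n ⟨hnT, hn0⟩ hIoi
      have := hle n hnT
      simp only [Set.mem_Ioi] at hIoi
      omega
    have hdisj2 : Disjoint (T \ {m0}) ({m0} : Set ℕ) := by
      rw [Set.disjoint_left]
      rintro n ⟨_, hn0⟩ h0
      exact hn0 h0
    have hU : (T \ {m0}) ∪ {m0} = T := by
      rw [Set.diff_union_self]
      exact Set.union_eq_self_of_subset_right (by simpa using hm0T)
    have e1 : b ((T \ {m0}) ∪ Set.Ioi m0) = b (T \ {m0}) + b (Set.Ioi m0) := by
      rw [b_eq, b_eq, b_eq]
      exact Summable.tsum_union_disjoint hdisj1 (g_summable.subtype _) (g_summable.subtype _)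
    have e2 : b T = b (T \ {m0}) + b ({m0} : Set ℕ) := by
      conv_lhs => rw [← hU]
      rw [b_eq, b_eq, b_eq]
      exact Summable.tsum_union_disjoint hdisj2 (g_summable.subtype _) (g_summable.subtype _)
    rw [e1, e2, b_singleton, b_Ioi]


noncomputable def eps (t : ℝ) (n : ℕ) : ℤ := ⌊2^(n+1) * t⌋ - 2 * ⌊2^n * t⌋

def Tset (t : ℝ) : Set ℕ := {n | eps t n = 1}

lemma eps_mem (t : ℝ) (n : ℕ) : eps t n = 0 ∨ eps t n = 1 := by
  have he : (2:ℝ)^(n+1) * t = 2 * ((2:ℝ)^n * t) := by ring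
  have h1 : 2 * ⌊(2:ℝ)^n * t⌋ ≤ ⌊(2:ℝ)^(n+1) * t⌋ := by
    rw [Int.le_floor]
    push_cast
    have := Int.floor_le ((2:ℝ)^n * t)
    linarith
  have h2 : ⌊(2:ℝ)^(n+1) * t⌋ < 2 * ⌊(2:ℝ)^n * t⌋ + 2 := by
    rw [Int.floor_lt]
    push_cast
    have := Int.lt_floor_add_one ((2:ℝ)^n * t)
    linarith
  unfold eps
  omega

lemma ind_Tset (t : ℝ) (n : ℕ) :
    (Tset t).indicator g n = (⌊(2:ℝ)^(n+1) * t⌋ : ℝ)/2^(n+1) - (⌊(2:ℝ)^n * t⌋:ℝ)/2^n := by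
  rcases eps_mem t n with h | h
  · have hni : n ∉ Tset t := by simp [Tset, h]
    rw [Set.indicator_of_notMem hni]
    have hf : ⌊(2:ℝ)^(n+1)*t⌋ = 2 * ⌊(2:ℝ)^n*t⌋ := by unfold eps at h; omega
    rw [hf]
    push_cast
    rw [pow_succ]
    field_simp
    ring
  · have hni : n ∈ Tset t := h
    rw [Set.indicator_of_mem hni]
    have hf : ⌊(2:ℝ)^(n+1)*t⌋ = 2 * ⌊(2:ℝ)^n*t⌋ + 1 := by unfold eps at h; omega
    rw [hf]
    show (2:ℝ)⁻¹^(n+1) = _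
    push_cast
    rw [pow_succ, pow_succ, inv_pow]
    field_simp
    ring

lemma psum_Tset (t : ℝ) (ht : t ∈ Set.Ico (0:ℝ) 1) (N : ℕ) :
    ∑ n ∈ Finset.range N, (Tset t).indicator g n = (⌊(2:ℝ)^N * t⌋:ℝ)/2^N := by
  have hcongr : ∀ n ∈ Finset.range N, (Tset t).indicator g n =
      (fun k : ℕ => (⌊(2:ℝ)^k * t⌋:ℝ)/2^k) (n+1) - (fun k : ℕ => (⌊(2:ℝ)^k * t⌋:ℝ)/2^k) n :=
    fun n _ => ind_Tset t n
  rw [Finset.sum_congr rfl hcongr, Finset.sum_range_sub (fun k : ℕ => (⌊(2:ℝ)^k * t⌋:ℝ)/2^k) N]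
  have h0 : ⌊(2:ℝ)^0 * t⌋ = 0 := by
    rw [pow_zero, one_mul]
    exact Int.floor_eq_zero_iff.mpr ht
  rw [h0]
  norm_num

lemma b_Tset (t : ℝ) (ht : t ∈ Set.Ico (0:ℝ) 1) : b (Tset t) = t := by
  have hsum : Filter.Tendsto (fun N => ∑ n ∈ Finset.range N, (Tset t).indicator g n)
      Filter.atTop (nhds (b (Tset t))) := (sumInd (Tset t)).hasSum.tendsto_sum_nat
  have hsum2 : Filter.Tendsto (fun N => (⌊(2:ℝ)^N * t⌋:ℝ)/2^N) Filter.atTop (nhds (b (Tset t))) := by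
    apply hsum.congr
    intro N
    exact psum_Tset t ht N
  have hlim : Filter.Tendsto (fun N => (⌊(2:ℝ)^N * t⌋:ℝ)/2^N) Filter.atTop (nhds t) := by
    apply tendsto_of_tendsto_of_tendsto_of_le_of_le
      (g := fun N : ℕ => t - (2:ℝ)⁻¹^N) (h := fun _ : ℕ => t)
    · have h1 : Filter.Tendsto (fun N : ℕ => (2:ℝ)⁻¹^N) Filter.atTop (nhds 0) :=
        tendsto_pow_atTop_nhds_zero_of_lt_one (by norm_num) (by norm_num)
      have := h1.const_sub t
      simpa using this
    · exact tendsto_const_nhds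
    · intro N
      have hp : (0:ℝ) < 2^N := by positivity
      have hfl := Int.sub_one_lt_floor ((2:ℝ)^N * t)
      have hinv : (2:ℝ)⁻¹^N * 2^N = 1 := by
        rw [← mul_pow]; norm_num
      rw [← sub_nonneg]
      have key : (⌊(2:ℝ)^N * t⌋:ℝ)/2^N - (t - (2:ℝ)⁻¹^N)
          = ((⌊(2:ℝ)^N * t⌋:ℝ) - (2^N * t - 1)) / 2^N := by
        field_simp
        nlinarith [hinv]
      rw [key]
      apply div_nonneg _ hp.le
      linarith
    · intro N
      have hp : (0:ℝ) < 2^N := by positivity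
      rw [div_le_iff₀ hp]
      have := Int.floor_le ((2:ℝ)^N * t)
      linarith
  exact tendsto_nhds_unique hsum2 hlim

lemma Tset_bdd_of_dyadic {t : ℝ} (hd : IsDyadic t) : Bdd (Tset t) := by
  obtain ⟨k, m, rfl⟩ := hd
  refine ⟨m, fun n hn => ?_⟩
  have hfl : ∀ j, m ≤ j → ⌊(2:ℝ)^j * ((k:ℝ)/2^m)⌋ = (k : ℤ) * 2^(j-m) := by
    intro j hj
    have hval : (2:ℝ)^j * ((k:ℝ)/2^m) = (((k : ℤ) * 2^(j-m) : ℤ) : ℝ) := by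
      push_cast
      have hsplit : (2:ℝ)^j = 2^(j-m) * 2^m := by
        rw [← pow_add]; congr 1; omega
      rw [hsplit]
      field_simp
    rw [hval, Int.floor_intCast]
  have h1 : ⌊(2:ℝ)^(n+1) * ((k:ℝ)/2^m)⌋ = (k : ℤ) * 2^(n+1-m) := hfl (n+1) (by omega)
  have h2 : ⌊(2:ℝ)^n * ((k:ℝ)/2^m)⌋ = (k : ℤ) * 2^(n-m) := hfl n (by omega)
  have hidx : n + 1 - m = (n - m) + 1 := by omega
  intro hc
  have : eps ((k:ℝ)/2^m) n = 1 := hc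
  unfold eps at this
  rw [h1, h2, hidx, pow_succ] at this
  ring_nf at this
  exact absurd this (by norm_num)


noncomputable def N (s : ℝ) : Cardinal := Cardinal.mk {T : Set ℕ // b T = s}

lemma N_neg {s : ℝ} (hs : s < 0) : N s = 0 := by
  have : IsEmpty {T : Set ℕ // b T = s} := by
    constructor
    rintro ⟨T, hT⟩
    exact absurd (hT ▸ b_nonneg T) (not_le.mpr hs)
  exact Cardinal.mk_eq_zero _

lemma N_zero : N 0 = 1 := by
  rw [N, Cardinal.eq_one_iff_unique]
  constructor
  · constructor
    rintro ⟨T, hT⟩ ⟨T', hT'⟩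
    apply Subtype.ext
    show T = T'
    have h1 : T = ∅ := by
      by_contra hc
      have := b_pos (Set.nonempty_iff_ne_empty.mpr hc)
      rw [hT] at this
      exact lt_irrefl 0 this
    have h2 : T' = ∅ := by
      by_contra hc
      have := b_pos (Set.nonempty_iff_ne_empty.mpr hc)
      rw [hT'] at this
      exact lt_irrefl 0 this
    rw [h1, h2]
  · exact ⟨⟨∅, b_empty⟩⟩

lemma N_nondyadic {s : ℝ} (hs : s ∈ Set.Ioo (0:ℝ) 1) (hd : ¬ IsDyadic s) : N s = 1 := by
  rw [N, Cardinal.eq_one_iff_unique]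
  constructor
  · constructor
    rintro ⟨T, hT⟩ ⟨T', hT'⟩
    apply Subtype.ext
    show T = T'
    by_contra hc
    exact hd (hT ▸ two_reps_dyadic (hT.trans hT'.symm) hc)
  · exact ⟨⟨Tset s, b_Tset s ⟨hs.1.le, hs.2⟩⟩⟩

lemma N_dyadic {s : ℝ} (hs : s ∈ Set.Ioo (0:ℝ) 1) (hd : IsDyadic s) : N s = 2 := by
  have hT1 : b (Tset s) = s := b_Tset s ⟨hs.1.le, hs.2⟩
  have hbdd : Bdd (Tset s) := Tset_bdd_of_dyadic hd
  have hnemp : (Tset s).Nonempty := by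
    rw [Set.nonempty_iff_ne_empty]
    intro hc
    rw [hc, b_empty] at hT1
    exact absurd hT1.symm (ne_of_gt hs.1)
  obtain ⟨T', hne', hbT'⟩ := second_rep hbdd hnemp
  rw [N, Cardinal.mk_eq_two_iff]
  refine ⟨⟨Tset s, hT1⟩, ⟨T', hbT'.trans hT1⟩, ?_, ?_⟩
  · intro hc
    exact hne' (congrArg Subtype.val hc).symm
  · apply Set.eq_univ_of_forall
    rintro ⟨T3, hT3⟩
    rcases at_most_two (T1 := Tset s) (T2 := T') (T3 := T3)
        hbT'.symm (hT1.trans hT3.symm) (fun hc => hne' hc.symm) with h | h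
    · left; exact Subtype.ext h
    · right; exact Subtype.ext h

lemma N_tri (s : ℝ) : N s = 0 ∨ N s = 1 ∨ (N s = 2 ∧ IsDyadic s) := by
  by_cases hne : Nonempty {T : Set ℕ // b T = s}
  · obtain ⟨⟨T1, h1⟩⟩ := hne
    by_cases hall : ∀ T : Set ℕ, b T = s → T = T1
    · right; left
      rw [N, Cardinal.eq_one_iff_unique]
      exact ⟨⟨fun ⟨T, hT⟩ ⟨T', hT'⟩ => Subtype.ext ((hall T hT).trans (hall T' hT').symm)⟩,
        ⟨⟨T1, h1⟩⟩⟩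
    · push_neg at hall
      obtain ⟨T2, h2, hne12⟩ := hall
      right; right
      constructor
      · rw [N, Cardinal.mk_eq_two_iff]
        refine ⟨⟨T1, h1⟩, ⟨T2, h2⟩, fun hc => hne12 (congrArg Subtype.val hc).symm, ?_⟩
        apply Set.eq_univ_of_forall
        rintro ⟨T3, hT3⟩
        rcases at_most_two (T1 := T1) (T2 := T2) (T3 := T3)
            (h1.trans h2.symm) (h1.trans hT3.symm) (fun hc => hne12 hc.symm) with h | h
        · left; exact Subtype.ext h
        · right; exact Subtype.ext h
      · exact h1 ▸ two_reps_dyadic (T := T1) (T' := T2) (h1.trans h2.symm) (fun hc => hne12 hc.symm)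
  · left
    rw [N]
    have : IsEmpty {T : Set ℕ // b T = s} := not_nonempty_iff.mp hne
    exact Cardinal.mk_eq_zero _


def shift (S : Set ℕ) : Set ℕ := {n | n + 1 ∈ S}
def unshift (T : Set ℕ) : Set ℕ := {n | ∃ m ∈ T, n = m + 1}

lemma shift_unshift (T : Set ℕ) : shift (unshift T) = T := by
  ext n; simp [shift, unshift]

lemma zero_not_unshift (T : Set ℕ) : 0 ∉ unshift T := by
  simp [unshift]

lemma unshift_shift {S : Set ℕ} (h0 : 0 ∉ S) : unshift (shift S) = S := by
  ext n
  cases n with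
  | zero => simp [unshift, h0]
  | succ m => simp [unshift, shift]

lemma insert_unshift_shift {S : Set ℕ} (h0 : 0 ∈ S) : insert 0 (unshift (shift S)) = S := by
  ext n
  cases n with
  | zero => simp [h0]
  | succ m => simp [unshift, shift]

lemma shift_insert0 (A : Set ℕ) : shift (insert 0 A) = shift A := by
  ext n; simp [shift]

section Main

variable {a : ℝ} {x : ℕ → ℝ}

lemma xg (hx : ∀ n, 1 ≤ n → x n = 1 / 2 ^ n) : ∀ n : ℕ, x (n + 1) = g n := by
  intro n
  rw [hx (n+1) (by omega)]
  simp [g, inv_pow, one_div]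

lemma summable_x (hx : ∀ n, 1 ≤ n → x n = 1 / 2 ^ n) : Summable x := by
  apply (summable_nat_add_iff 1).1
  exact g_summable.congr (fun n => (xg hx n).symm)

lemma sum_split0 (hx : ∀ n, 1 ≤ n → x n = 1 / 2 ^ n) (S : Set ℕ) :
    ∑' n : S, x n = S.indicator x 0 + b (shift S) := by
  rw [tsum_subtype, Summable.tsum_eq_zero_add ((summable_x hx).indicator S)]
  congr 1
  rw [b]
  apply tsum_congr
  intro n
  by_cases h : n + 1 ∈ S
  · rw [Set.indicator_of_mem h, Set.indicator_of_mem (show n ∈ shift S from h)]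
    exact xg hx n
  · rw [Set.indicator_of_notMem h, Set.indicator_of_notMem (show n ∉ shift S from h)]

lemma sum_split_mem (hx0 : x 0 = a) (hx : ∀ n, 1 ≤ n → x n = 1 / 2 ^ n) {S : Set ℕ}
    (h : 0 ∈ S) : ∑' n : S, x n = a + b (shift S) := by
  rw [sum_split0 hx, Set.indicator_of_mem h, hx0]

lemma sum_split_not (hx0 : x 0 = a) (hx : ∀ n, 1 ≤ n → x n = 1 / 2 ^ n) {S : Set ℕ}
    (h : 0 ∉ S) : ∑' n : S, x n = b (shift S) := by
  rw [sum_split0 hx, Set.indicator_of_notMem h, zero_add]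

lemma card_split (hx0 : x 0 = a) (hx : ∀ n, 1 ≤ n → x n = 1 / 2 ^ n) (t : ℝ) :
    cardFun x t = N t + N (t - a) := by
  classical
  have e : {S : Set ℕ // ∑' n : S, x n = t} ≃
      ({T : Set ℕ // b T = t} ⊕ {T : Set ℕ // b T = t - a}) :=
    { toFun := fun S =>
        if h : 0 ∈ S.1 then
          Sum.inr ⟨shift S.1, by
            have hS := S.2
            rw [sum_split_mem hx0 hx h] at hS
            linarith⟩
        else
          Sum.inl ⟨shift S.1, by
            have hS := S.2
            rw [sum_split_not hx0 hx h] at hS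
            exact hS⟩
      invFun := fun z =>
        match z with
        | Sum.inl T => ⟨unshift T.1, by
            rw [sum_split_not hx0 hx (zero_not_unshift T.1), shift_unshift]
            exact T.2⟩
        | Sum.inr T => ⟨insert 0 (unshift T.1), by
            rw [sum_split_mem hx0 hx (Set.mem_insert 0 _), shift_insert0, shift_unshift,
              T.2]
            ring⟩
      left_inv := by
        rintro ⟨S, hS⟩
        by_cases h : 0 ∈ S
        · simp only [dif_pos h]
          exact Subtype.ext (insert_unshift_shift h)
        · simp only [dif_neg h]
          exact Subtype.ext (unshift_shift h)
      right_inv := by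
        rintro (⟨T, hT⟩ | ⟨T, hT⟩)
        · simp only [dif_neg (zero_not_unshift T)]
          exact congrArg Sum.inl (Subtype.ext (shift_unshift T))
        · simp only [dif_pos (Set.mem_insert 0 _)]
          exact congrArg Sum.inr (Subtype.ext ((shift_insert0 _).trans (shift_unshift T))) }
  rw [cardFun, Cardinal.mk_congr e, Cardinal.mk_sum, Cardinal.lift_id, Cardinal.lift_id]
  rfl

lemma mem_achSet_of_ne {t : ℝ} (h : cardFun x t ≠ 0) : t ∈ achSet x := by
  obtain ⟨S, hS⟩ := nonempty_subtype.mp (Cardinal.mk_ne_zero_iff.mp h)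
  exact ⟨S, hS⟩

end Main

end S9

theorem stmt9 (a : ℝ) (ha : a ∈ Set.Ioo (0 : ℝ) 1) (had : ¬ IsDyadic a)
    (x : ℕ → ℝ) (hx0 : x 0 = a) (hx : ∀ n, 1 ≤ n → x n = 1 / 2 ^ n) :
    cardFun x '' achSet x = {1, 2, 3} := by
  have key := S9.card_split (a := a) (x := x) hx0 hx
  have hnotboth : ∀ t : ℝ, IsDyadic t → IsDyadic (t - a) → False := by
    intro t h1 h2
    apply had
    have := S9.isDyadic_sub h1 h2 (by linarith [ha.1])
    simpa using this
  apply Set.eq_of_subset_of_subset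
  · rintro c ⟨t, ht, rfl⟩
    have h0 : cardFun x t ≠ 0 := by
      rw [cardFun, Cardinal.mk_ne_zero_iff, nonempty_subtype]
      exact ht
    rw [key t] at h0 ⊢
    rcases S9.N_tri t with h1 | h1 | ⟨h1, hd1⟩ <;>
      rcases S9.N_tri (t - a) with h2 | h2 | ⟨h2, hd2⟩ <;>
      rw [h1, h2] at h0 ⊢ <;>
      simp only [Set.mem_insert_iff, Set.mem_singleton_iff]
    · exact absurd (by norm_num) h0
    · norm_num
    · norm_num
    · norm_num
    · norm_num
    · norm_num
    · norm_num
    · norm_num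
    · exact absurd hd2 (fun h => hnotboth t hd1 h)
  · intro c hc
    simp only [Set.mem_insert_iff, Set.mem_singleton_iff] at hc
    rcases hc with rfl | rfl | rfl
    · -- c = 1 : witness t = 0
      have hval : cardFun x 0 = 1 := by
        rw [key 0, S9.N_zero, S9.N_neg (by linarith [ha.1] : (0:ℝ) - a < 0)]
        norm_num
      exact ⟨0, S9.mem_achSet_of_ne (by rw [hval]; norm_num), hval⟩
    · -- c = 2 : witness a dyadic below a
      obtain ⟨n, hn⟩ := exists_pow_lt_of_lt_one ha.1 (show (2:ℝ)⁻¹ < 1 by norm_num)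
      set d := (2:ℝ)⁻¹ ^ n with hd
      have hdyad : IsDyadic d := ⟨1, n, by simp [hd, inv_pow, one_div]⟩
      have hdIoo : d ∈ Set.Ioo (0:ℝ) 1 := ⟨by positivity, lt_trans hn ha.2⟩
      have hval : cardFun x d = 2 := by
        rw [key d, S9.N_dyadic hdIoo hdyad, S9.N_neg (by linarith : d - a < 0)]
        norm_num
      exact ⟨d, S9.mem_achSet_of_ne (by rw [hval]; norm_num), hval⟩
    · -- c = 3 : witness a dyadic in (a,1)
      obtain ⟨n, hn⟩ := exists_pow_lt_of_lt_one (show (0:ℝ) < 1 - a by linarith [ha.2])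
        (show (2:ℝ)⁻¹ < 1 by norm_num)
      set d := 1 - (2:ℝ)⁻¹ ^ n with hd
      have hpow : (0:ℝ) < (2:ℝ)⁻¹ ^ n := by positivity
      have h1n : (1:ℕ) ≤ 2 ^ n := Nat.one_le_two_pow
      have hdyad : IsDyadic d := by
        refine ⟨2 ^ n - 1, n, ?_⟩
        rw [hd]
        push_cast [Nat.cast_sub h1n]
        rw [inv_pow]
        push_cast
        field_simp
      have hdIoo : d ∈ Set.Ioo (0:ℝ) 1 :=
        ⟨by simp only [hd]; linarith [ha.1], by simp only [hd]; linarith⟩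
      have hdaIoo : d - a ∈ Set.Ioo (0:ℝ) 1 :=
        ⟨by simp only [hd]; linarith, by simp only [hd]; linarith [ha.1]⟩
      have hnd : ¬ IsDyadic (d - a) := fun h => hnotboth d hdyad h
      have hval : cardFun x d = 3 := by
        rw [key d, S9.N_dyadic hdIoo hdyad, S9.N_nondyadic hdaIoo hnd]
        norm_num
      exact ⟨d, S9.mem_achSet_of_ne (by rw [hval]; norm_num), hval⟩
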